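/- Let α, β > 0 and δ(x,y) = max(−α(y−x), β(y−x)) on ℝ. A non-expansive mapping T : ℝ → ℝ is not firm if and only if for every ε > 0 there exist distinct x, y ∈ ℝ such that δ-distances ‖Tx − y‖ and ‖Ty − z_{xy}‖ are both less than ε·‖y − x‖, where z_{xy} is the unique point with ‖z_{xy} − y‖ = ‖y − x‖ and (y−x)(z_{xy}−y) < 0, and ‖x‖ = max(−αx, βx). -/
import Mathlib


open Filter Topology

set_option maxHeartbeats 1000000

set_option maxHeartbeats 1000000

private lemma Nnonneg (α β w : ℝ) (hα : 0 < α) (hβ : 0 < β) : 0 ≤ max (-α*w) (β*w) := by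
  rcases le_or_gt 0 w with h | h
  · exact le_max_of_le_right (by nlinarith)
  · exact le_max_of_le_left (by nlinarith)

private lemma N_add (α β p q : ℝ) :
    max (-α*(p+q)) (β*(p+q)) ≤ max (-α*p) (β*p) + max (-α*q) (β*q) := by
  apply max_le
  · calc -α*(p+q) = -α*p + -α*q := by ring
      _ ≤ _ := add_le_add (le_max_left _ _) (le_max_left _ _)
  · calc β*(p+q) = β*p + β*q := by ring
      _ ≤ _ := add_le_add (le_max_right _ _) (le_max_right _ _)

private lemma dir2core (α β x y a b ε t0 : ℝ) (hα : 0 < α) (hβ : 0 < β) (hε : 0 < ε)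
    (hxy : x < y) (ht0 : 0 < t0) (ht8 : t0 ≤ 1/8) (ht6 : 6*t0 ≤ ε)
    (ht2 : α < β → α^2 ≤ β^2*(1 - 2*t0))
    (ne1 : max (-α*(b-a)) (β*(b-a)) ≤ max (-α*(y-x)) (β*(y-x)))
    (ne2 : max (-α*(a-b)) (β*(a-b)) ≤ max (-α*(x-y)) (β*(x-y)))
    (fail : (1-2*t0) * max (max (-α*(y-x)) (β*(y-x)))
        (max (max (-α*(a-x)) (β*(a-x))) (max (-α*(b-y)) (β*(b-y))))
      + t0 * (max (-α*(b-x)) (β*(b-x)) + max (-α*(y-a)) (β*(y-a)))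
      < max (-α*(b-a)) (β*(b-a))) :
    ∃ z, max (-α*(z-y)) (β*(z-y)) = max (-α*(y-x)) (β*(y-x)) ∧ (y-x)*(z-y) < 0 ∧
      max (-α*(a-y)) (β*(a-y)) < ε * max (-α*(y-x)) (β*(y-x)) ∧
      max (-α*(b-z)) (β*(b-z)) < ε * max (-α*(y-x)) (β*(y-x)) := by
  have hu : 0 < y - x := by linarith
  have hd : max (-α*(y-x)) (β*(y-x)) = β*(y-x) := max_eq_right (by nlinarith)
  set M := max (max (-α*(y-x)) (β*(y-x)))
      (max (max (-α*(a-x)) (β*(a-x))) (max (-α*(b-y)) (β*(b-y)))) with hMdef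
  have hMd : β*(y-x) ≤ M := hd ▸ le_max_left _ _
  have hB1 : 0 ≤ max (-α*(b-x)) (β*(b-x)) := Nnonneg α β _ hα hβ
  have hB2 : 0 ≤ max (-α*(y-a)) (β*(y-a)) := Nnonneg α β _ hα hβ
  have hDpos : 0 < β*(y-x) := mul_pos hβ hu
  rcases le_or_gt 0 (b-a) with hba | hba
  · exfalso
    have h1 : max (-α*(b-a)) (β*(b-a)) = β*(b-a) := max_eq_right (by nlinarith)
    have hNa := N_add α β (b-x) (y-a)
    have harg : β*((b-x)+(y-a)) ≤ max (-α*((b-x)+(y-a))) (β*((b-x)+(y-a))) := le_max_right _ _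
    have hsum := harg.trans hNa
    have hne1' : β*(b-a) ≤ β*(y-x) := by rw [h1, hd] at ne1; exact ne1
    rw [h1] at fail
    nlinarith [hsum, hMd, fail, hne1',
      mul_nonneg (by linarith : (0:ℝ) ≤ 1-2*t0) (sub_nonneg.mpr hMd),
      mul_nonneg ht0.le (sub_nonneg.mpr hsum)]
  · have h1 : max (-α*(b-a)) (β*(b-a)) = -α*(b-a) := max_eq_left (by nlinarith)
    have hv1 : α*(a-b) ≤ β*(y-x) := by
      rw [h1, hd] at ne1; linarith
    rw [h1] at fail
    have hfail2 : (1-2*t0)*M < α*(a-b) := by nlinarith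
    have hM0 : 0 ≤ M := le_trans hDpos.le hMd
    have hk3pre : (1-2*t0)*(β*(y-x)) ≤ (1-2*t0)*M :=
      mul_le_mul_of_nonneg_left hMd (by linarith)
    have k3 : (1-2*t0)*(β*(y-x)) < α*(a-b) := lt_of_le_of_lt hk3pre hfail2
    rcases le_or_gt β α with hba2 | hba2
    · -- main case β ≤ α
      have hX : (1-2*t0)*M ≤ β*(y-x) := le_trans hfail2.le hv1
      have hMub : M ≤ (1+3*t0)*(β*(y-x)) := by
        have h1' : M ≤ (1+3*t0)*((1-2*t0)*M) := by nlinarith [mul_nonneg hM0 (by nlinarith : (0:ℝ) ≤ t0 - 6*t0^2)]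
        calc M ≤ (1+3*t0)*((1-2*t0)*M) := h1'
          _ ≤ (1+3*t0)*(β*(y-x)) := mul_le_mul_of_nonneg_left hX (by linarith)
      have hRa : β*(a-x) ≤ M :=
        le_trans (le_trans (le_max_right _ _) (le_max_left _ _)) (le_max_right _ _)
      have hSb : -α*(b-y) ≤ M :=
        le_trans (le_trans (le_max_left _ _) (le_max_right _ _)) (le_max_right _ _)
      have k1 : β*(a - y) ≤ 3*t0*(β*(y-x)) := by linarith [hRa.trans hMub]
      have k2 : α*(y-b) ≤ (1+3*t0)*(β*(y-x)) := by linarith [hSb.trans hMub]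
      have k4 : α*(y-a) ≤ 5*t0*(β*(y-x)) := by linarith
      have hαz : α*(β/α*(y-x)) = β*(y-x) := by field_simp
      have hz0 : 0 < β/α*(y-x) := mul_pos (div_pos hβ hα) hu
      have h5ε : 5*t0*(β*(y-x)) < ε*(β*(y-x)) :=
        mul_lt_mul_of_pos_right (by linarith) hDpos
      refine ⟨y - β/α*(y-x), ?_, ?_, ?_, ?_⟩
      · have e1 : -α*(y - β/α*(y-x) - y) = β*(y-x) := by field_simp; ring
        rw [hd, ← e1]
        apply max_eq_left
        nlinarith [mul_pos hβ hz0, mul_pos hα hz0]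
      · have e0 : y - β/α*(y-x) - y = -(β/α*(y-x)) := by ring
        rw [e0]
        nlinarith [mul_pos hu hz0]
      · rw [hd]
        apply max_lt
        · linarith [h5ε]
        · linarith [mul_lt_mul_of_pos_right (show 3*t0 < ε by linarith) hDpos]
      · rw [hd]
        apply max_lt
        · have e2 : -α*(b - (y - β/α*(y-x))) = α*(y-b) - β*(y-x) := by field_simp; ring
          rw [e2]
          linarith
        · have hkey : α*(β*(b - (y - β/α*(y-x)))) < α*(ε*(β*(y-x))) := by
            have e3 : α*(β*(b - (y - β/α*(y-x)))) = β*(α*(b-y)) + β*(β*(y-x)) := by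
              field_simp; ring
            rw [e3]
            have hby : α*(b-y) ≤ 3*t0*(α*(y-x)) - (1-2*t0)*(β*(y-x)) := by
              have k1' : α*(a-y) ≤ 3*t0*(α*(y-x)) := by
                have := mul_le_mul_of_nonneg_left k1 hα.le
                have h2 := mul_le_mul_of_nonneg_left hba2 (mul_nonneg (mul_nonneg (by linarith : (0:ℝ) ≤ 3*t0) hβ.le) hu.le)
                nlinarith [mul_le_mul_of_nonneg_right (mul_le_mul_of_nonneg_left hba2 (by linarith : (0:ℝ) ≤ 3*t0)) hu.le, mul_pos hβ hu]
              linarith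
            have h4 := mul_le_mul_of_nonneg_left hby hβ.le
            -- β*(α*(b-y)) ≤ 3t0*α*β*u - (1-2t0)*β²*u ; add β²u : ≤ 3t0αβu + 2t0β²u ≤ 5t0αβu < εαβu
            have h5 : β*(β*(y-x)) ≤ α*(β*(y-x)) :=
              mul_le_mul_of_nonneg_right hba2 hDpos.le
            have h6 : t0*(β*(β*(y-x))) ≤ t0*(α*(β*(y-x))) :=
              mul_le_mul_of_nonneg_left h5 ht0.le
            have h7 : 5*t0*(α*(β*(y-x))) < ε*(α*(β*(y-x))) :=
              mul_lt_mul_of_pos_right (by linarith) (mul_pos hα hDpos)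
            nlinarith [h4, h6, h7]
          exact lt_of_mul_lt_mul_left hkey hα.le
    · -- β > α : contradiction
      exfalso
      have hv2 : β*(a-b) ≤ α*(y-x) := by
        have h2 : max (-α*(x-y)) (β*(x-y)) = α*(y-x) := by
          rw [max_eq_left (by nlinarith)]; ring
        rw [h2] at ne2
        exact le_trans (le_max_right _ _) ne2
      have ht2' := ht2 hba2
      nlinarith [mul_lt_mul_of_pos_left k3 hβ, mul_le_mul_of_nonneg_left hv2 hα.le, hu,
        mul_le_mul_of_nonneg_right ht2' hu.le]


private lemma dir1core (α β x y a b z q r s t t1 ε : ℝ) (hα : 0 < α) (hβ : 0 < β)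
    (hxy : x < y) (ht1 : 0 < t1) (ht1t : t1 ≤ t)
    (hq : 0 ≤ q) (hr : 0 ≤ r) (hs : 0 ≤ s)
    (hsum : q + r + s + 2*t ≤ 1)
    (firm : max (-α*(b-a)) (β*(b-a)) ≤ q * max (-α*(y-x)) (β*(y-x))
      + r * max (-α*(a-x)) (β*(a-x)) + s * max (-α*(b-y)) (β*(b-y))
      + t * (max (-α*(b-x)) (β*(b-x)) + max (-α*(y-a)) (β*(y-a))))
    (hz1 : max (-α*(z-y)) (β*(z-y)) = max (-α*(y-x)) (β*(y-x)))
    (hz2 : (y-x)*(z-y) < 0)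
    (hc1 : max (-α*(a-y)) (β*(a-y)) < ε * max (-α*(y-x)) (β*(y-x)))
    (hc2 : max (-α*(b-z)) (β*(b-z)) < ε * max (-α*(y-x)) (β*(y-x)))
    (hεdef : ε = t1 * min (α/β) (β/α) / (8*(1 + max (α/β) (β/α)))) : False := by
  set ρ := min (α/β) (β/α) with hρdef
  set C := max (α/β) (β/α) with hCdef
  have hρ0 : 0 < ρ := lt_min (div_pos hα hβ) (div_pos hβ hα)
  have hρα : ρ ≤ α/β := min_le_left _ _
  have hρβ : ρ ≤ β/α := min_le_right _ _
  have hCα : α/β ≤ C := le_max_left _ _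
  have hCβ : β/α ≤ C := le_max_right _ _
  have hρβα : ρ*β ≤ α := by
    have h := (le_div_iff₀ hβ).mp hρα; linarith only [h]
  have hραβ : ρ*α ≤ β := by
    have h := (le_div_iff₀ hα).mp hρβ; linarith only [h]
  have hαβC : α ≤ β*C := by
    have h := (div_le_iff₀ hβ).mp hCα; linarith only [h]
  have hβαC : β ≤ α*C := by
    have h := (div_le_iff₀ hα).mp hCβ; linarith only [h]
  have hρ1 : ρ ≤ 1 := by
    rcases le_total α β with h | h
    · exact le_trans hρα (by rw [div_le_one hβ]; exact h)
    · exact le_trans hρβ (by rw [div_le_one hα]; exact h)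
  have hC1 : 1 ≤ C := by
    rcases le_total α β with h | h
    · exact le_trans (by rw [le_div_iff₀ hα]; linarith only [h]) hCβ
    · exact le_trans (by rw [le_div_iff₀ hβ]; linarith only [h]) hCα
  have ht02 : t ≤ 1/2 := by linarith only [hsum, hq, hr, hs]
  have ht0 : 0 < t := lt_of_lt_of_le ht1 ht1t
  have hε0 : 0 < ε := by
    rw [hεdef]; exact div_pos (mul_pos ht1 hρ0) (by linarith only [hC1])
  have hεsmall : ε*(8*(1+C)) = t1*ρ := by
    rw [hεdef]; field_simp
  have hε32 : 32*ε ≤ ρ := by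
    have e1 : t1*ρ ≤ (1/2)*ρ :=
      mul_le_mul_of_nonneg_right (by linarith only [ht1t, ht02]) hρ0.le
    have e2 : ε*1 ≤ ε*C := mul_le_mul_of_nonneg_left hC1 hε0.le
    linarith only [hεsmall, e1, e2]
  have hu : 0 < y - x := by linarith only [hxy]
  have hαu : 0 < α*(y-x) := mul_pos hα hu
  have hDpos : 0 < β*(y-x) := mul_pos hβ hu
  have hd : max (-α*(y-x)) (β*(y-x)) = β*(y-x) :=
    max_eq_right (by linarith only [hαu, hDpos])
  rw [hd] at firm hc1 hc2
  have hzy : z - y < 0 := by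
    by_contra h
    push_neg at h
    exact absurd hz2 (not_lt.mpr (mul_nonneg hu.le h))
  have hz1' : α*(y-z) = β*(y-x) := by
    have e1 : β*(z-y) ≤ 0 := mul_nonpos_of_nonneg_of_nonpos hβ.le hzy.le
    have e2 : 0 ≤ α*(y-z) := mul_nonneg hα.le (by linarith only [hzy])
    rw [hd, max_eq_left (by linarith only [e1, e2])] at hz1
    linarith only [hz1]
  obtain ⟨hc1a, hc1b⟩ := max_lt_iff.mp hc1
  obtain ⟨hc2a, hc2b⟩ := max_lt_iff.mp hc2
  -- product facts
  have hεD : 0 ≤ ε*(β*(y-x)) := mul_nonneg hε0.le hDpos.le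
  have hρβu : ρ*(β*(y-x)) ≤ α*(y-x) := by
    have h := mul_le_mul_of_nonneg_right hρβα hu.le; linarith only [h]
  have hεβu : ε*(β*(y-x)) ≤ α*(y-x) := by
    have e1 : (32*ε)*(β*(y-x)) ≤ ρ*(β*(y-x)) := mul_le_mul_of_nonneg_right hε32 hDpos.le
    linarith only [e1, hρβu, hεD]
  have hβzy : β*(z-y) ≤ 0 := mul_nonpos_of_nonneg_of_nonpos hβ.le hzy.le
  have hay : a - y < ε*(y-x) := by
    have h1 : β*(a-y) < β*(ε*(y-x)) := by linarith only [hc1b]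
    exact lt_of_mul_lt_mul_left h1 hβ.le
  have hbz : b - z < ε*(y-x) := by
    have h1 : β*(b-z) < β*(ε*(y-x)) := by linarith only [hc2b]
    exact lt_of_mul_lt_mul_left h1 hβ.le
  have hαεu : α*(ε*(y-x)) ≤ ε*C*(β*(y-x)) := by
    have h := mul_le_mul_of_nonneg_right hαβC (mul_nonneg hε0.le hu.le)
    linarith only [h]
  -- n1
  have n1 : max (-α*(a-x)) (β*(a-x)) ≤ (1+ε)*(β*(y-x)) := by
    apply max_le
    · linarith only [hc1a, hεβu, hDpos, hεD]
    · linarith only [hc1b, hDpos]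
  -- n2
  have n2 : max (-α*(b-y)) (β*(b-y)) ≤ (1+ε)*(β*(y-x)) := by
    apply max_le
    · linarith only [hc2a, hz1']
    · linarith only [hc2b, hβzy, hDpos]
  -- n3
  have hβz' : β*(z-y) ≤ -ρ*(β*(y-x)) := by
    have hβz : α*(β*(z-y)) ≤ α*(-ρ*(β*(y-x))) := by
      have e : α*(β*(z-y)) = -(β*(α*(y-z))) := by ring
      rw [e, hz1']
      have c := mul_le_mul_of_nonneg_right hραβ hDpos.le
      linarith only [c]
    exact le_of_mul_le_mul_left hβz hα
  have n3 : max (-α*(b-x)) (β*(b-x)) ≤ (1-ρ)*(β*(y-x)) + ε*(β*(y-x)) := by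
    apply max_le
    · linarith only [hc2a, hz1', hρβu]
    · linarith only [hc2b, hβz', hDpos]
  -- n4
  have n4 : max (-α*(y-a)) (β*(y-a)) ≤ ε*C*(β*(y-x)) := by
    apply max_le
    · have h1 := mul_lt_mul_of_pos_left hay hα
      linarith only [h1, hαεu]
    · have h2 : β*(α*(y-a)) < β*(ε*(β*(y-x))) :=
        mul_lt_mul_of_pos_left (by linarith only [hc1a]) hβ
      have h3 : β*(ε*(β*(y-x))) ≤ (α*C)*(ε*(β*(y-x))) :=
        mul_le_mul_of_nonneg_right hβαC hεD
      have h1 : α*(β*(y-a)) < α*(ε*C*(β*(y-x))) := by linarith only [h2, h3]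
      exact (lt_of_mul_lt_mul_left h1 hα.le).le
  -- n5
  have n5 : (1 - ε*(1+C))*(β*(y-x)) ≤ max (-α*(b-a)) (β*(b-a)) := by
    have h3 := mul_lt_mul_of_pos_left hbz hα
    have h6 : (1 - ε*(1+C))*(β*(y-x)) ≤ α*(a-b) := by
      linarith only [hc1a, h3, hz1', hαεu]
    calc (1 - ε*(1+C))*(β*(y-x)) ≤ α*(a-b) := h6
      _ = -α*(b-a) := by ring
      _ ≤ _ := le_max_left _ _
  -- combine
  have c1 := mul_le_mul_of_nonneg_left n1 hr
  have c2 := mul_le_mul_of_nonneg_left n2 hs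
  have c3 := mul_le_mul_of_nonneg_left (add_le_add n3 n4) ht0.le
  have hfirm2 : (1 - ε*(1+C))*(β*(y-x)) ≤
      (q + (r+s)*(1+ε) + t*((1-ρ) + ε*(1+C)))*(β*(y-x)) := by
    have h0 := le_trans n5 firm
    linarith only [h0, c1, c2, c3]
  have hscal : 1 - ε*(1+C) ≤ q + (r+s)*(1+ε) + t*((1-ρ) + ε*(1+C)) :=
    le_of_mul_le_mul_right hfirm2 hDpos
  have A1 := mul_le_mul_of_nonneg_right
    (show q+r+s ≤ 1-2*t by linarith only [hsum]) hε0.le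
  have A2 : t*(ε*(1+C)) ≤ (1/2)*(ε*(1+C)) :=
    mul_le_mul_of_nonneg_right ht02 (mul_nonneg hε0.le (by linarith only [hC1]))
  have A3 : t1*(1+ρ) ≤ t*(1+ρ) :=
    mul_le_mul_of_nonneg_right ht1t (by linarith only [hρ0])
  have A4 : t1*ρ ≤ t1*1 := mul_le_mul_of_nonneg_left hρ1 ht1.le
  have A5 : 0 ≤ q*ε := mul_nonneg hq hε0.le
  have A6 : 0 ≤ t*ε := mul_nonneg ht0.le hε0.le
  have A7 : 0 ≤ t*ρ := mul_nonneg ht0.le hρ0.le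
  have A8 : ε*1 ≤ ε*C := mul_le_mul_of_nonneg_left hC1 hε0.le
  have A9 : 0 ≤ t1*ρ := mul_nonneg ht1.le hρ0.le
  linarith only [hscal, A1, A2, A3, A4, A5, A6, A7, A8, A9, hεsmall, ht0, hsum]


def IsWeakMetric {X : Type*} (δ : X → X → ℝ) : Prop :=
  (∀ x, δ x x = 0) ∧ (∀ x y, 0 ≤ δ x y) ∧ (∀ x y z, δ x z ≤ δ x y + δ y z)

def IsNonexpansive {X : Type*} (δ : X → X → ℝ) (T : X → X) : Prop :=
  ∀ x y, δ (T x) (T y) ≤ δ x y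

def IsFirm {X : Type*} (δ : X → X → ℝ) (T : X → X) : Prop :=
  ∃ q r s t : X → X → ℝ,
    (∀ x y, 0 ≤ q x y) ∧ (∀ x y, 0 ≤ r x y) ∧ (∀ x y, 0 ≤ s x y) ∧ (∀ x y, 0 ≤ t x y) ∧
    (∃ α > 0, ∀ x y, α ≤ t x y) ∧
    (∀ x y, q x y + r x y + s x y + 2 * t x y ≤ 1) ∧
    (∀ x y, δ (T x) (T y) ≤ q x y * δ x y + r x y * δ x (T x) + s x y * δ y (T y)
      + t x y * (δ x (T y) + δ (T x) y))

theorem stmt16 (α β : ℝ) (hα : 0 < α) (hβ : 0 < β) (T : ℝ → ℝ)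
    (N : ℝ → ℝ) (hN : ∀ z : ℝ, N z = max (-α * z) (β * z))
    (hT : IsNonexpansive (fun x y : ℝ => N (y - x)) T) :
    ¬ IsFirm (fun x y : ℝ => N (y - x)) T ↔
      ∀ ε > (0 : ℝ), ∃ x y z : ℝ, x ≠ y ∧
        N (z - y) = N (y - x) ∧ (y - x) * (z - y) < 0 ∧
        N (T x - y) < ε * N (y - x) ∧ N (T y - z) < ε * N (y - x) := by
  have E : ∀ p q : ℝ, max (-β*(-p - -q)) (α*(-p - -q)) = max (-α*(p-q)) (β*(p-q)) :=
    fun p q => by rw [max_comm]; congr 1 <;> ring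
  have E2 : ∀ w : ℝ, max (-β*(-w)) (α*(-w)) = max (-α*w) (β*w) :=
    fun w => by rw [max_comm]; congr 1 <;> ring
  constructor
  · -- ¬ Firm → approximate reversal pairs exist
    intro hnf ε hε
    classical
    have hc : ∀ w : ℝ, 0 ≤ N w := fun w => by rw [hN]; exact Nnonneg α β w hα hβ
    set τ : ℝ := (if α = β then (1:ℝ) else ((max α β)^2 - (min α β)^2) / (4*(max α β)^2))
      with hτ
    have hτ0 : 0 < τ := by
      rw [hτ]; split_ifs with h
      · norm_num
      · have hm : 0 < max α β := lt_of_lt_of_le hα (le_max_left _ _)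
        apply div_pos
        · rcases lt_or_gt_of_ne h with h' | h'
          · rw [max_eq_right h'.le, min_eq_left h'.le]; nlinarith
          · rw [max_eq_left h'.le, min_eq_right h'.le]; nlinarith
        · nlinarith
    set t0 : ℝ := min (min (ε/6) (1/8)) τ with ht0def
    have ht0pos : 0 < t0 := lt_min (lt_min (by linarith) (by norm_num)) hτ0
    have ht8 : t0 ≤ 1/8 := le_trans (min_le_left _ _) (min_le_right _ _)
    have ht6 : 6*t0 ≤ ε := by
      have h := le_trans (min_le_left (min (ε/6) (1/8)) τ) (min_le_left (ε/6) (1/8))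
      linarith
    set qq : ℝ → ℝ → ℝ := fun u v =>
      if max (N (v-u)) (N (T v - v)) < N (T u - u) then 0
      else if N (v-u) < N (T v - v) then 0 else 1-2*t0 with hqq
    set rr : ℝ → ℝ → ℝ := fun u v =>
      if max (N (v-u)) (N (T v - v)) < N (T u - u) then 1-2*t0 else 0 with hrr
    set ss : ℝ → ℝ → ℝ := fun u v =>
      if max (N (v-u)) (N (T v - v)) < N (T u - u) then 0
      else if N (v-u) < N (T v - v) then 1-2*t0 else 0 with hss
    set tt : ℝ → ℝ → ℝ := fun _ _ => t0 with htt
    have hkey : ∃ u v : ℝ, ¬ (N (T v - T u) ≤ qq u v * N (v - u) + rr u v * N (T u - u)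
        + ss u v * N (T v - v) + tt u v * (N (T v - u) + N (v - T u))) := by
      by_contra hcon
      push_neg at hcon
      apply hnf
      refine ⟨qq, rr, ss, tt, ?_, ?_, ?_, ?_, ⟨t0, ht0pos, fun _ _ => le_refl t0⟩, ?_, ?_⟩
      · intro u v; simp only [hqq]; split_ifs <;> linarith
      · intro u v; simp only [hrr]; split_ifs <;> linarith
      · intro u v; simp only [hss]; split_ifs <;> linarith
      · intro u v; simp only [htt]; linarith
      · intro u v; simp only [hqq, hrr, hss, htt]; split_ifs <;> linarith
      · exact fun u v => hcon u v
    obtain ⟨u, v, hfail0⟩ := hkey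
    have hne : u ≠ v := by
      rintro rfl
      apply hfail0
      have hL : N (T u - T u) = 0 := by rw [hN]; norm_num
      rw [hL]
      have h1 : 0 ≤ qq u u := by simp only [hqq]; split_ifs <;> linarith
      have h2 : 0 ≤ rr u u := by simp only [hrr]; split_ifs <;> linarith
      have h3 : 0 ≤ ss u u := by simp only [hss]; split_ifs <;> linarith
      have h4 : 0 ≤ tt u u := by simp only [htt]; linarith
      exact add_nonneg (add_nonneg (add_nonneg (mul_nonneg h1 (hc _))
        (mul_nonneg h2 (hc _))) (mul_nonneg h3 (hc _)))
        (mul_nonneg h4 (add_nonneg (hc _) (hc _)))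
    push_neg at hfail0
    have hsel : qq u v * N (v-u) + rr u v * N (T u - u) + ss u v * N (T v - v)
        = (1-2*t0) * max (N (v-u)) (max (N (T u - u)) (N (T v - v))) := by
      simp only [hqq, hrr, hss]
      split_ifs with h1 h2
      · obtain ⟨ha, hb⟩ := max_lt_iff.mp h1
        rw [max_eq_left hb.le, max_eq_right ha.le]; ring
      · have hRS : N (T u - u) ≤ max (N (v-u)) (N (T v - v)) := not_lt.mp h1
        have hin : max (N (v-u)) (max (N (T u - u)) (N (T v - v))) = N (T v - v) := by
          apply le_antisymm
          · exact max_le (le_of_lt h2) (max_le (le_trans hRS (max_le h2.le le_rfl)) le_rfl)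
          · exact le_max_of_le_right (le_max_right _ _)
        rw [hin]; ring
      · have hS : N (T v - v) ≤ N (v-u) := not_lt.mp h2
        have hR : N (T u - u) ≤ N (v-u) := le_trans (not_lt.mp h1) (max_le le_rfl hS)
        rw [max_eq_left (max_le hR hS)]; ring
    simp only [htt] at hfail0
    have hfail : (1-2*t0) * max (N (v-u)) (max (N (T u - u)) (N (T v - v)))
        + t0 * (N (T v - u) + N (v - T u)) < N (T v - T u) := by
      rw [← hsel]; linarith [hfail0]
    have ne1 := hT u v
    have ne2 := hT v u
    simp only [hN] at hfail ne1 ne2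
    rcases lt_or_gt_of_ne hne with hxy | hxy
    · have ht2 : α < β → α^2 ≤ β^2*(1-2*t0) := by
        intro hab
        have h5 : t0 ≤ τ := min_le_right _ _
        rw [hτ, if_neg (ne_of_lt hab), max_eq_right hab.le, min_eq_left hab.le] at h5
        have h6 := (le_div_iff₀ (by nlinarith : (0:ℝ) < 4*β^2)).mp h5
        nlinarith [mul_nonneg ht0pos.le (sq_nonneg β)]
      obtain ⟨z, g1, g2, g3, g4⟩ := dir2core α β u v (T u) (T v) ε t0 hα hβ hε hxy
        ht0pos ht8 ht6 ht2 ne1 ne2 hfail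
      refine ⟨u, v, z, hne, ?_, g2, ?_, ?_⟩ <;> simp only [hN] <;> assumption
    · have ht2 : β < α → β^2 ≤ α^2*(1-2*t0) := by
        intro hab
        have h5 : t0 ≤ τ := min_le_right _ _
        rw [hτ, if_neg (ne_of_gt hab), max_eq_left hab.le, min_eq_right hab.le] at h5
        have h6 := (le_div_iff₀ (by nlinarith : (0:ℝ) < 4*α^2)).mp h5
        nlinarith [mul_nonneg ht0pos.le (sq_nonneg α)]
      have ne1' : max (-β*(-T v - -T u)) (α*(-T v - -T u))
          ≤ max (-β*(-v - -u)) (α*(-v - -u)) := by simp only [E]; exact ne1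
      have ne2' : max (-β*(-T u - -T v)) (α*(-T u - -T v))
          ≤ max (-β*(-u - -v)) (α*(-u - -v)) := by simp only [E]; exact ne2
      have hfail' : (1-2*t0) * max (max (-β*(-v - -u)) (α*(-v - -u)))
            (max (max (-β*(-T u - -u)) (α*(-T u - -u))) (max (-β*(-T v - -v)) (α*(-T v - -v))))
          + t0 * (max (-β*(-T v - -u)) (α*(-T v - -u)) + max (-β*(-v - -T u)) (α*(-v - -T u)))
          < max (-β*(-T v - -T u)) (α*(-T v - -T u)) := by simp only [E]; exact hfail
      obtain ⟨z', g1, g2, g3, g4⟩ := dir2core β α (-u) (-v) (-T u) (-T v) ε t0 hβ hα hε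
        (by linarith) ht0pos ht8 ht6 ht2 ne1' ne2' hfail'
      refine ⟨u, v, -z', hne, ?_, ?_, ?_, ?_⟩
      · simp only [hN]
        rw [show z' - -v = -(-z' - v) from by ring, E2] at g1
        simp only [E] at g1
        exact g1
      · rw [show (v-u)*(-z' - v) = (-v - -u)*(z' - -v) from by ring]; exact g2
      · simp only [hN]
        simp only [E] at g3
        exact g3
      · simp only [hN]
        rw [show -T v - z' = -(T v - -z') from by ring, E2] at g4
        simp only [E] at g4
        exact g4
  · -- approximate reversal pairs → ¬ Firm
    intro hRHS hFirm
    obtain ⟨q, r, s, t, hq, hr, hs, htn, ⟨t1, ht1, ht1le⟩, hsum, hineq⟩ := hFirm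
    have hρ0 : 0 < min (α/β) (β/α) := lt_min (div_pos hα hβ) (div_pos hβ hα)
    have hC0 : 0 < max (α/β) (β/α) := lt_of_lt_of_le (div_pos hα hβ) (le_max_left _ _)
    set ε : ℝ := t1 * min (α/β) (β/α) / (8*(1 + max (α/β) (β/α))) with hεdef
    have hε0 : 0 < ε := by
      rw [hεdef]; exact div_pos (mul_pos ht1 hρ0) (by linarith)
    obtain ⟨u, v, z, hne, hz1, hz2, hc1, hc2⟩ := hRHS ε hε0
    have firm := hineq u v
    simp only [hN] at firm hz1 hc1 hc2
    rcases lt_or_gt_of_ne hne with hxy | hxy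
    · exact dir1core α β u v (T u) (T v) z (q u v) (r u v) (s u v) (t u v) t1 ε hα hβ hxy
        ht1 (ht1le u v) (hq u v) (hr u v) (hs u v) (hsum u v) firm hz1 hz2 hc1 hc2 hεdef
    · have hεdef2 : ε = t1 * min (β/α) (α/β) / (8*(1 + max (β/α) (α/β))) := by
        rw [min_comm (β/α) (α/β), max_comm (β/α) (α/β)]
      have firm' : max (-β*(-T v - -T u)) (α*(-T v - -T u))
          ≤ q u v * max (-β*(-v - -u)) (α*(-v - -u))
          + r u v * max (-β*(-T u - -u)) (α*(-T u - -u))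
          + s u v * max (-β*(-T v - -v)) (α*(-T v - -v))
          + t u v * (max (-β*(-T v - -u)) (α*(-T v - -u))
            + max (-β*(-v - -T u)) (α*(-v - -T u))) := by simp only [E]; exact firm
      have hz1' : max (-β*(-z - -v)) (α*(-z - -v)) = max (-β*(-v - -u)) (α*(-v - -u)) := by
        simp only [E]; exact hz1
      have hz2' : (-v - -u) * (-z - -v) < 0 := by
        rw [show (-v - -u)*(-z - -v) = (v-u)*(z-v) from by ring]; exact hz2
      have hc1' : max (-β*(-T u - -v)) (α*(-T u - -v))
          < ε * max (-β*(-v - -u)) (α*(-v - -u)) := by simp only [E]; exact hc1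
      have hc2' : max (-β*(-T v - -z)) (α*(-T v - -z))
          < ε * max (-β*(-v - -u)) (α*(-v - -u)) := by simp only [E]; exact hc2
      exact dir1core β α (-u) (-v) (-T u) (-T v) (-z) (q u v) (r u v) (s u v) (t u v) t1 ε
        hβ hα (by linarith) ht1 (ht1le u v) (hq u v) (hr u v) (hs u v) (hsum u v)
        firm' hz1' hz2' hc1' hc2' hεdef2
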